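/- Fix β ∈ (0,1) and let W(γ) := (γ²/4 + max(1 − γ, 0))/(1 − β) for γ ≥ 0. Then inf_{γ≥0} sup_{c∈[0,∞), l∈[0,1]} [(l − c) + γ(√c − √l) + β·W(γ)] = 1/(4(1 − β)); moreover the infimum is attained at γ = 1, and at γ = 1 the inner supremum is attained both at (c, l) = (1/4, 0) and at (c, l) = (1/4, 1). -/

import Mathlib

/-- `W(γ) = (γ²/4 + max(1 − γ, 0))/(1 − β)`, the solution of the auxiliary
functional equation in the σ = 1/2 principal–agent example. -/
noncomputable def Wfun (β γ : ℝ) : ℝ := (γ ^ 2 / 4 + max (1 - γ) 0) / (1 - β)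

/-- The inner expression `(l − c) + γ(√c − √l) + β·W(γ)`. -/
noncomputable def Efun (β γ c l : ℝ) : ℝ :=
  (l - c) + γ * (Real.sqrt c - Real.sqrt l) + β * Wfun β γ

/-- The inner supremum `Φ(γ) = sup_{c ≥ 0, l ∈ [0,1]} E(γ, c, l)`. -/
noncomputable def Phi (β γ : ℝ) : ℝ :=
  sSup {z : ℝ | ∃ c l : ℝ, 0 ≤ c ∧ 0 ≤ l ∧ l ≤ 1 ∧ z = Efun β γ c l}

lemma wfun_mul (β γ : ℝ) (hβ1 : β < 1) :
    (1 - β) * Wfun β γ = γ ^ 2 / 4 + max (1 - γ) 0 := by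
  have : (1:ℝ) - β ≠ 0 := by linarith
  field_simp [Wfun]
  rw [Wfun]
  field_simp

lemma isGreatest_E (β γ : ℝ) (hβ1 : β < 1) (hγ : 0 ≤ γ) :
    IsGreatest {z : ℝ | ∃ c l : ℝ, 0 ≤ c ∧ 0 ≤ l ∧ l ≤ 1 ∧ z = Efun β γ c l} (Wfun β γ) := by
  have hsq : Real.sqrt (γ ^ 2 / 4) = γ / 2 := by
    rw [show γ ^ 2 / 4 = (γ / 2) ^ 2 by ring, Real.sqrt_sq (by linarith)]
  have hW := wfun_mul β γ hβ1
  constructor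
  · by_cases h : γ ≤ 1
    · refine ⟨γ ^ 2 / 4, 1, by positivity, zero_le_one, le_refl 1, ?_⟩
      rw [max_eq_left (by linarith : (0:ℝ) ≤ 1 - γ)] at hW
      simp only [Efun, hsq, Real.sqrt_one]
      nlinarith [hW]
    · refine ⟨γ ^ 2 / 4, 0, by positivity, le_refl 0, zero_le_one, ?_⟩
      rw [max_eq_right (by linarith : 1 - γ ≤ (0:ℝ))] at hW
      simp only [Efun, hsq, Real.sqrt_zero]
      nlinarith [hW]
  · rintro z ⟨c, l, hc, hl0, hl1, rfl⟩
    have h1 : γ * Real.sqrt c - c ≤ γ ^ 2 / 4 := by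
      nlinarith [Real.sq_sqrt hc, sq_nonneg (Real.sqrt c - γ / 2)]
    have hsl1 : Real.sqrt l ≤ 1 := Real.sqrt_le_one.mpr hl1
    have hls : l ≤ Real.sqrt l := by
      nlinarith [Real.sq_sqrt hl0, Real.sqrt_nonneg l,
        mul_nonneg (Real.sqrt_nonneg l) (by linarith : (0:ℝ) ≤ 1 - Real.sqrt l)]
    have h2 : l - γ * Real.sqrt l ≤ max (1 - γ) 0 := by
      have : l - γ * Real.sqrt l ≤ l * (1 - γ) := by nlinarith
      rcases le_total γ 1 with h | h
      · have : l * (1 - γ) ≤ 1 - γ := by nlinarith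
        calc l - γ * Real.sqrt l ≤ 1 - γ := by nlinarith
          _ ≤ max (1 - γ) 0 := le_max_left _ _
      · have : l * (1 - γ) ≤ 0 := by nlinarith
        calc l - γ * Real.sqrt l ≤ 0 := by nlinarith
          _ ≤ max (1 - γ) 0 := le_max_right _ _
    simp only [Efun]
    nlinarith [hW]

lemma phi_eq (β γ : ℝ) (hβ1 : β < 1) (hγ : 0 ≤ γ) : Phi β γ = Wfun β γ :=
  (isGreatest_E β γ hβ1 hγ).csSup_eq

/-- **value of the inf-sup functional equation, σ = 1/2.**
For `β ∈ (0,1)`, `inf_{γ≥0} Φ(γ) = 1/(4(1 − β))`, the infimum being attained at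
`γ = 1` (so `1/(4(1−β))` is the least element of the value set), and at `γ = 1` the inner
supremum is attained both at `(c,l) = (1/4, 0)` and at `(c,l) = (1/4, 1)`. -/
theorem stmt11 (β : ℝ) (hβ0 : 0 < β) (hβ1 : β < 1) :
    IsLeast {z : ℝ | ∃ γ : ℝ, 0 ≤ γ ∧ z = Phi β γ} (1 / (4 * (1 - β)))
    ∧ Phi β 1 = 1 / (4 * (1 - β))
    ∧ Efun β 1 (1 / 4) 0 = Phi β 1
    ∧ Efun β 1 (1 / 4) 1 = Phi β 1 := by
  have hb : (1:ℝ) - β ≠ 0 := by linarith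
  have hW1 : Wfun β 1 = 1 / (4 * (1 - β)) := by
    simp only [Wfun, sub_self, max_self]
    field_simp
    norm_num
  have hP1 : Phi β 1 = 1 / (4 * (1 - β)) := by
    rw [phi_eq β 1 hβ1 zero_le_one, hW1]
  have hsqrt : Real.sqrt (1 / 4 : ℝ) = 1 / 2 := by
    rw [show (1/4 : ℝ) = (1/2) ^ 2 by norm_num, Real.sqrt_sq (by norm_num)]
  refine ⟨⟨⟨1, zero_le_one, hP1.symm⟩, ?_⟩, hP1, ?_, ?_⟩
  · rintro z ⟨γ, hγ, rfl⟩
    rw [phi_eq β γ hβ1 hγ, Wfun,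
      show (1:ℝ) / (4 * (1 - β)) = (1/4) / (1 - β) by field_simp]
    have h14 : (1:ℝ)/4 ≤ γ ^ 2 / 4 + max (1 - γ) 0 := by
      rcases le_total γ 1 with h | h
      · rw [max_eq_left (by linarith)]; nlinarith [sq_nonneg (γ - 1)]
      · rw [max_eq_right (by linarith)]; nlinarith
    exact div_le_div_of_nonneg_right h14 (by linarith)
  · rw [hP1]
    simp only [Efun, hsqrt, Real.sqrt_zero, Wfun, sub_self, max_self]
    field_simp
    ring
  · rw [hP1]
    simp only [Efun, hsqrt, Real.sqrt_one, Wfun, sub_self, max_self]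
    field_simp
    ring
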